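/- Let K be a field of characteristic zero, let n ≥ 1 and d ≥ 0, and let F be the field of rational functions over K in the indeterminates m̂_{i,j,k} (1 ≤ i,j ≤ n, 0 ≤ k ≤ d) and q̂_k (0 ≤ k ≤ d), i.e., F = Frac(K[m̂_{i,j,k}, q̂_k]). Consider the generic matrix M̂ ∈ M_n(F(X)) whose (i,j) entry is (Σ_{k=0}^{d} m̂_{i,j,k} X^k)/(Σ_{k=0}^{d} q̂_k X^k), where the derivation on F(X) sends every element of F to 0 and X to 1. Then e_1 is a cyclic vector for M̂: the n×n matrix Δ_n(e_1), whose rows are e_1, δ(e_1), ..., δ^{n−1}(e_1) with δ(u) = uM̂ + u′, is invertible over F(X). Consequently, on a generic input the Danilevski–Barkatou–Zürcher algorithm produces a single companion block, equal to the output of the cyclic-vector method with initial vector e_1. -/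

import Mathlib

set_option maxHeartbeats 1000000
set_option synthInstance.maxHeartbeats 400000


/-- `δ(u) = u M + u′` for a row vector `u`, the derivation `der` being applied
entrywise. -/
def cvDelta {F : Type*} [Field F] {n : ℕ} (der : F → F)
    (M : Matrix (Fin n) (Fin n) F) (u : Fin n → F) : Fin n → F :=
  Matrix.vecMul u M + fun i => der (u i)

/-- The field `F = K(m̂_{i,j,k}, q̂_k)` of rational functions over `K` in the
indeterminates `m̂_{i,j,k}` (`1 ≤ i,j ≤ n`, `0 ≤ k ≤ d`) and `q̂_k` (`0 ≤ k ≤ d`). -/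
abbrev GenEntryField (K : Type*) [Field K] (n d : ℕ) : Type _ :=
  FractionRing (MvPolynomial ((Fin n × Fin n × Fin (d + 1)) ⊕ Fin (d + 1)) K)

/-- The generic matrix `M̂ ∈ Mₙ(F(X))` with `(i,j)` entry
`(Σ_k m̂_{i,j,k} X^k) / (Σ_k q̂_k X^k)`. -/
noncomputable def genericMatrix (K : Type*) [Field K] (n d : ℕ) :
    Matrix (Fin n) (Fin n) (RatFunc (GenEntryField K n d)) :=
  Matrix.of fun i j =>
    (∑ k : Fin (d + 1),
      RatFunc.C (algebraMap (MvPolynomial ((Fin n × Fin n × Fin (d + 1)) ⊕ Fin (d + 1)) K)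
          (GenEntryField K n d) (MvPolynomial.X (Sum.inl (i, j, k))))
        * RatFunc.X ^ (k : ℕ)) /
    (∑ k : Fin (d + 1),
      RatFunc.C (algebraMap (MvPolynomial ((Fin n × Fin n × Fin (d + 1)) ⊕ Fin (d + 1)) K)
          (GenEntryField K n d) (MvPolynomial.X (Sum.inr k)))
        * RatFunc.X ^ (k : ℕ))

namespace GenCyclicAux
open Polynomial

variable (K : Type*) [Field K] (n d : ℕ)

abbrev σt : Type := (Fin n × Fin n × Fin (d + 1)) ⊕ Fin (d + 1)
abbrev Rg : Type _ := MvPolynomial (σt n d) K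
abbrev Bg : Type _ := Polynomial (Rg K n d)
abbrev Fg : Type _ := FractionRing (Rg K n d)

noncomputable def ι : Bg K n d →+* RatFunc (Fg K n d) :=
  (algebraMap (Polynomial (Fg K n d)) (RatFunc (Fg K n d))).comp
    (Polynomial.mapRingHom (algebraMap (Rg K n d) (Fg K n d)))

theorem ι_injective : Function.Injective (ι K n d) := by
  refine (RatFunc.algebraMap_injective _).comp (Polynomial.map_injective _ ?_)
  exact IsFractionRing.injective (Rg K n d) (Fg K n d)

noncomputable def Pnum (i j : Fin n) : Bg K n d :=
  ∑ k : Fin (d + 1), C (MvPolynomial.X (Sum.inl (i, j, k))) * X ^ (k : ℕ)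

noncomputable def Qden : Bg K n d :=
  ∑ k : Fin (d + 1), C (MvPolynomial.X (Sum.inr k)) * X ^ (k : ℕ)

theorem ι_C (a : Rg K n d) :
    ι K n d (C a) = RatFunc.C (algebraMap (Rg K n d) (Fg K n d) a) := by
  simp [ι, RatFunc.algebraMap_C]

theorem ι_X : ι K n d X = RatFunc.X := by
  simp [ι, RatFunc.algebraMap_X]

def cval : σt n d → K
  | Sum.inl p => if (p.2.2 : ℕ) = 0 ∧ (p.2.1 : ℕ) = (p.1 : ℕ) + 1 then 1 else 0
  | Sum.inr k => if (k : ℕ) = 0 then 1 else 0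

noncomputable def φg : Bg K n d →+* Polynomial K :=
  Polynomial.mapRingHom (MvPolynomial.eval (cval K n d))

theorem φg_Qden : φg K n d (Qden K n d) = 1 := by
  have : ∀ k : Fin (d + 1),
      (Polynomial.C (if (k : ℕ) = 0 then (1:K) else 0)) * X ^ (k : ℕ)
        = if k = (0 : Fin (d+1)) then 1 else 0 := by
    intro k
    rcases eq_or_ne k 0 with h | h
    · subst h; simp
    · have : (k : ℕ) ≠ 0 := fun hh => h (Fin.ext hh)
      simp [this, h]
  simp only [φg, Qden, map_sum, Polynomial.coe_mapRingHom, Polynomial.map_mul,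
    Polynomial.map_C, Polynomial.map_pow, Polynomial.map_X, MvPolynomial.eval_X, cval, this]
  simp

theorem φg_Pnum (i j : Fin n) :
    φg K n d (Pnum K n d i j) = if (j : ℕ) = (i : ℕ) + 1 then 1 else 0 := by
  have : ∀ k : Fin (d + 1),
      (Polynomial.C (if (k : ℕ) = 0 ∧ (j : ℕ) = (i : ℕ) + 1 then (1:K) else 0)) * X ^ (k : ℕ)
        = if k = (0 : Fin (d+1)) then (if (j : ℕ) = (i : ℕ) + 1 then 1 else 0) else 0 := by
    intro k
    rcases eq_or_ne k 0 with h | h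
    · subst h; simp
    · have : (k : ℕ) ≠ 0 := fun hh => h (Fin.ext hh)
      simp [this, h]
  simp only [φg, Pnum, map_sum, Polynomial.coe_mapRingHom, Polynomial.map_mul,
    Polynomial.map_C, Polynomial.map_pow, Polynomial.map_X, MvPolynomial.eval_X, cval, this]
  simp

theorem Qden_ne_zero : Qden K n d ≠ 0 := by
  intro h
  have := φg_Qden K n d
  rw [h, map_zero] at this
  exact one_ne_zero this.symm

variable {n} in
/-- denominator-cleared iterates of `δ` starting from `e_{i0}`. -/
noncomputable def vv (i0 : Fin n) : ℕ → Fin n → Bg K n d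
  | 0 => Pi.single i0 1
  | (k+1) => fun j =>
      (∑ i, vv i0 k i * Pnum K n d i j)
        + derivative (vv i0 k j) * Qden K n d
        - (k : Bg K n d) * (vv i0 k j * derivative (Qden K n d))

theorem φg_vv (i0 : Fin n) (h0 : (i0 : ℕ) = 0) :
    ∀ k, k < n → ∀ j, φg K n d (vv K d i0 k j) = if (j : ℕ) = k then 1 else 0 := by
  intro k
  induction k with
  | zero =>
    intro _ j
    rw [vv, Pi.single_apply]
    rcases eq_or_ne j i0 with h | h
    · subst h; simp [h0]
    · have : (j : ℕ) ≠ 0 := by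
        rw [← h0]; exact fun hh => h (Fin.ext hh)
      simp [h, this]
  | succ k ih =>
    intro hk j
    have hk' : k < n := Nat.lt_of_succ_lt hk
    have hder : derivative (φg K n d (vv K d i0 k j)) = 0 := by
      rw [ih hk' j]; split_ifs <;> simp
    have hderφ : φg K n d (derivative (vv K d i0 k j)) = 0 := by
      rw [φg] at hder ⊢
      rw [Polynomial.coe_mapRingHom, ← Polynomial.derivative_map]
      exact hder
    rw [vv]
    simp only [map_sub, map_add, map_mul, map_sum, map_natCast, φg_Pnum, φg_Qden, hderφ, ih hk']
    have hQ' : derivative (1 : Polynomial K) = 0 := by simp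
    rw [show φg K n d (derivative (Qden K n d)) = 0 by
      rw [φg, Polynomial.coe_mapRingHom, ← Polynomial.derivative_map]
      rw [show (Qden K n d).map (MvPolynomial.eval (cval K n d)) = 1 from φg_Qden K n d]
      simp]
    have hsum : ∀ i : Fin n,
        (if (i : ℕ) = k then (1:Polynomial K) else 0) * (if (j : ℕ) = (i : ℕ) + 1 then 1 else 0)
          = if i = (⟨k, hk'⟩ : Fin n) then (if (j : ℕ) = k + 1 then 1 else 0) else 0 := by
      intro i
      rcases eq_or_ne i (⟨k, hk'⟩ : Fin n) with h | h
      · subst h; simp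
      · have : (i : ℕ) ≠ k := fun hh => h (Fin.ext hh)
        simp [this, h]
    simp [hsum]

theorem det_vv_ne_zero (hn : 1 ≤ n) :
    (Matrix.of fun i j : Fin n => vv K d (⟨0, hn⟩ : Fin n) (i : ℕ) j).det ≠ 0 := by
  intro h
  have h1 : φg K n d (Matrix.of fun i j : Fin n => vv K d (⟨0, hn⟩ : Fin n) (i : ℕ) j).det
      = ((Matrix.of fun i j : Fin n => vv K d (⟨0, hn⟩ : Fin n) (i : ℕ) j).map
          (φg K n d)).det := RingHom.map_det _ _
  rw [h, map_zero] at h1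
  have h2 : ((Matrix.of fun i j : Fin n => vv K d (⟨0, hn⟩ : Fin n) (i : ℕ) j).map
      (φg K n d)) = (1 : Matrix (Fin n) (Fin n) (Polynomial K)) := by
    ext i j
    rw [Matrix.map_apply, Matrix.of_apply, φg_vv K n d _ rfl (i : ℕ) i.isLt j,
      Matrix.one_apply]
    by_cases hij : i = j
    · subst hij; simp
    · have : (j : ℕ) ≠ (i : ℕ) := fun hh => hij (Fin.ext hh.symm)
      simp [hij, this]
  rw [h2, Matrix.det_one] at h1
  exact one_ne_zero h1.symm

section Der

variable {n d}
variable (der : RatFunc (Fg K n d) → RatFunc (Fg K n d))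
variable (h_add : ∀ a b, der (a + b) = der a + der b)
variable (h_mul : ∀ a b, der (a * b) = a * der b + der a * b)
variable (h_X : der RatFunc.X = 1)
variable (h_C : ∀ c : Fg K n d, der (RatFunc.C c) = 0)

include h_add in
theorem der_zero : der 0 = 0 := by
  have := h_add 0 0
  simp at this
  linear_combination (norm := abel_nf) this  -- fixup later

include h_add h_mul h_X h_C in
theorem der_ι (p : Bg K n d) : der (ι K n d p) = ι K n d (derivative p) := by
  induction p using Polynomial.induction_on with
  | C a => rw [ι_C, h_C, derivative_C, map_zero]
  | add p q hp hq => rw [map_add, h_add, hp, hq, derivative_add, map_add]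
  | monomial m a hm =>
    have key : Polynomial.C a * X ^ m + derivative (Polynomial.C a * X ^ m) * X
        = derivative (Polynomial.C a * X ^ (m + 1)) := by
      rw [derivative_C_mul, derivative_C_mul, derivative_X_pow, derivative_X_pow]
      cases m with
      | zero => simp
      | succ m =>
        rw [Polynomial.C_eq_natCast, Polynomial.C_eq_natCast]
        push_cast
        ring
    have e1 : (Polynomial.C a * X ^ (m + 1) : Bg K n d) = Polynomial.C a * X ^ m * X := by
      rw [pow_succ, mul_assoc]
    conv_lhs => rw [e1]
    rw [map_mul, h_mul, ι_X, h_X, hm, mul_one, ← ι_X K n d, ← map_mul, ← map_add, key]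

include h_mul in
theorem der_div (a b : RatFunc (Fg K n d)) (hb : b ≠ 0) :
    der (a / b) = (der a * b - a * der b) / b ^ 2 := by
  have h := h_mul (a / b) b
  rw [div_mul_cancel₀ a hb] at h
  rw [eq_div_iff (pow_ne_zero 2 hb), h]
  field_simp
  ring

theorem genericMatrix_entry (i j : Fin n) :
    genericMatrix K n d i j = ι K n d (Pnum K n d i j) / ι K n d (Qden K n d) := by
  simp [genericMatrix, Pnum, Qden, map_sum, map_mul, map_pow, ι_C, ι_X]

include h_add h_mul h_X h_C in
theorem iterate_e1 (hn : 1 ≤ n) (k : ℕ) :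
    (cvDelta der (genericMatrix K n d))^[k] (Pi.single (⟨0, hn⟩ : Fin n) 1)
      = fun j => ι K n d (vv K d (⟨0, hn⟩ : Fin n) k j) / ι K n d (Qden K n d) ^ k := by
  have hq : ι K n d (Qden K n d) ≠ 0 := fun h =>
    Qden_ne_zero K n d (ι_injective K n d (by simpa using h))
  induction k with
  | zero =>
    funext j
    simp [vv, Pi.single_apply, apply_ite (ι K n d)]
  | succ k ih =>
    rw [Function.iterate_succ_apply', ih]
    funext j
    have hqk : ι K n d (Qden K n d) ^ k ≠ 0 := pow_ne_zero _ hq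
    have hqk1 : ι K n d (Qden K n d) ^ (k + 1) ≠ 0 := pow_ne_zero _ hq
    have hsum : Matrix.vecMul
        (fun j => ι K n d (vv K d (⟨0, hn⟩ : Fin n) k j) / ι K n d (Qden K n d) ^ k)
        (genericMatrix K n d) j
        = ι K n d (∑ i, vv K d (⟨0, hn⟩ : Fin n) k i * Pnum K n d i j)
            / ι K n d (Qden K n d) ^ (k + 1) := by
      rw [Matrix.vecMul, dotProduct]
      rw [map_sum, Finset.sum_div]
      refine Finset.sum_congr rfl fun i _ => ?_
      rw [genericMatrix_entry, div_mul_div_comm, ← map_mul, pow_succ]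
    have hder : der (ι K n d (vv K d (⟨0, hn⟩ : Fin n) k j) / ι K n d (Qden K n d) ^ k)
        = ι K n d (derivative (vv K d (⟨0, hn⟩ : Fin n) k j) * Qden K n d ^ k
            - vv K d (⟨0, hn⟩ : Fin n) k j * derivative (Qden K n d ^ k))
          / (ι K n d (Qden K n d) ^ k) ^ 2 := by
      rw [← map_pow, der_div K der h_mul _ _ (by rw [map_pow]; exact hqk),
        der_ι K der h_add h_mul h_X h_C, der_ι K der h_add h_mul h_X h_C,
        map_sub, map_mul, map_mul]
    show Matrix.vecMul _ (genericMatrix K n d) j + der _ = _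
    have h2 : ((ι K n d) (Qden K n d) ^ k) ^ 2 ≠ 0 := pow_ne_zero _ hqk
    rw [hsum, hder, div_add_div _ _ hqk1 h2, div_eq_div_iff (mul_ne_zero hqk1 h2) hqk1]
    simp only [← RingHom.map_pow, ← RingHom.map_mul, ← RingHom.map_add]
    refine congrArg (ι K n d) ?_
    rw [vv]
    cases k with
    | zero => simp only [pow_zero, derivative_one, Nat.cast_zero, mul_zero, zero_mul, sub_zero,
        mul_one, one_mul]; ring
    | succ m =>
      rw [derivative_pow, Polynomial.C_eq_natCast]
      push_cast
      ring
  
end Der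

end GenCyclicAux

/-- `e₁` is a cyclic vector for the generic matrix `M̂`: the matrix `Δₙ(e₁)`
whose rows are `e₁, δ(e₁), …, δ^{n−1}(e₁)` is invertible over `F(X)`.
Consequently, on a generic input the DBZ algorithm produces a single companion
block, equal to the output of the cyclic-vector method with initial vector `e₁`.
Here `der` is the derivation of `F(X)` vanishing on `F` with `der X = 1`. -/
theorem generic_e1_is_cyclic {K : Type*} [Field K] [CharZero K]
    (n d : ℕ) (hn : 1 ≤ n)
    (der : RatFunc (GenEntryField K n d) → RatFunc (GenEntryField K n d))
    (h_add : ∀ a b, der (a + b) = der a + der b)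
    (h_mul : ∀ a b, der (a * b) = a * der b + der a * b)
    (h_X : der RatFunc.X = 1)
    (h_C : ∀ c : GenEntryField K n d, der (RatFunc.C c) = 0) :
    IsUnit (Matrix.of fun i j : Fin n =>
      (cvDelta der (genericMatrix K n d))^[(i : ℕ)]
        (Pi.single (⟨0, hn⟩ : Fin n) 1) j).det := by
  classical
  open GenCyclicAux in
  have key := iterate_e1 K der h_add h_mul h_X h_C hn
  have hq : ι K n d (Qden K n d) ≠ 0 := fun h =>
    Qden_ne_zero K n d (ι_injective K n d (by simpa using h))
  have hmat : (Matrix.of fun i j : Fin n =>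
        (cvDelta der (genericMatrix K n d))^[(i : ℕ)]
          (Pi.single (⟨0, hn⟩ : Fin n) 1) j)
      = Matrix.diagonal (fun i : Fin n => (ι K n d (Qden K n d) ^ (i : ℕ))⁻¹)
          * ((Matrix.of fun i j : Fin n => vv K d (⟨0, hn⟩ : Fin n) (i : ℕ) j).map
              (ι K n d)) := by
    ext i j
    rw [Matrix.diagonal_mul, Matrix.of_apply, key (i : ℕ), Matrix.map_apply, Matrix.of_apply,
      inv_mul_eq_div]
  rw [hmat, Matrix.det_mul, Matrix.det_diagonal]
  have h3 := (RingHom.map_det (ι K n d)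
    (Matrix.of fun i j : Fin n => vv K d (⟨0, hn⟩ : Fin n) (i : ℕ) j)).symm
  rw [RingHom.mapMatrix_apply] at h3
  rw [h3, isUnit_iff_ne_zero]
  refine mul_ne_zero (Finset.prod_ne_zero_iff.2 fun i _ => inv_ne_zero (pow_ne_zero _ hq)) ?_
  intro h
  exact det_vv_ne_zero K n d hn (ι_injective K n d (by simpa using h))
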